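/- For all real x ≥ 0 and real y with 0 ≤ y ≤ 1, the generalized binomial coefficient satisfies Γ(x+y+1)/(Γ(x+1)Γ(y+1)) ≥ (x+y)^y. -/

import Mathlib

theorem gamma_binom_lower_bound_small (x y : ℝ) (hx : 0 ≤ x) (hy0 : 0 ≤ y) (hy1 : y ≤ 1) :
    Real.Gamma (x + y + 1) / (Real.Gamma (x + 1) * Real.Gamma (y + 1)) ≥ (x + y) ^ y := by
  have hGx : 0 < Real.Gamma (x + 1) := Real.Gamma_pos_of_pos (by linarith)
  rcases eq_or_lt_of_le hy0 with h0 | h0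
  · rw [← h0]
    simp [Real.Gamma_one, ne_of_gt hGx]
  rcases eq_or_lt_of_le hy1 with h1 | h1
  · subst h1
    have hne : x + 1 ≠ 0 := by linarith
    rw [Real.Gamma_add_one hne]
    norm_num [Real.Gamma_two, Real.rpow_one]
    rw [mul_div_assoc, div_self (ne_of_gt hGx), mul_one]
  · set t := x + y with ht
    have htpos : 0 < t := by linarith
    have hGt : 0 < Real.Gamma (t + 1) := Real.Gamma_pos_of_pos (by linarith)
    -- log-convexity step
    have key : Real.Gamma (x + 1) ≤ Real.Gamma (t + 1) ^ (1 - y) * Real.Gamma t ^ y := by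
      have := Real.Gamma_mul_add_mul_le_rpow_Gamma_mul_rpow_Gamma
        (s := t + 1) (t := t) (a := 1 - y) (b := y)
        (by linarith) htpos (by linarith) h0 (by ring)
      have heq : (1 - y) * (t + 1) + y * t = x + 1 := by rw [ht]; ring
      rwa [heq] at this
    have hGam : Real.Gamma (t + 1) = t * Real.Gamma t := by
      have := Real.Gamma_add_one (ne_of_gt htpos); linarith [this]
    have hGtt : Real.Gamma t = Real.Gamma (t + 1) / t := by
      rw [hGam]; field_simp
    have key2 : Real.Gamma (x + 1) ≤ Real.Gamma (t + 1) / t ^ y := by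
      calc Real.Gamma (x + 1) ≤ Real.Gamma (t + 1) ^ (1 - y) * Real.Gamma t ^ y := key
        _ = Real.Gamma (t + 1) ^ (1 - y) * (Real.Gamma (t + 1) / t) ^ y := by rw [hGtt]
        _ = Real.Gamma (t + 1) ^ (1 - y) * (Real.Gamma (t + 1) ^ y / t ^ y) := by
            rw [Real.div_rpow hGt.le htpos.le]
        _ = (Real.Gamma (t + 1) ^ (1 - y) * Real.Gamma (t + 1) ^ y) / t ^ y := by ring
        _ = Real.Gamma (t + 1) / t ^ y := by
            rw [← Real.rpow_add hGt]; norm_num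
    -- Gamma (y+1) ≤ 1
    have hGy1 : Real.Gamma (y + 1) ≤ 1 := by
      have hc := Real.convexOn_log_Gamma.2 (Set.mem_Ioi.mpr one_pos)
        (Set.mem_Ioi.mpr two_pos) (by linarith : (0:ℝ) ≤ 1 - y) h0.le (by ring)
      simp only [Function.comp_apply, Real.Gamma_one, Real.Gamma_two, Real.log_one, smul_eq_mul] at hc
      have h2 : (1 - y) * 1 + y * 2 = y + 1 := by ring
      rw [h2] at hc
      have hGypos : 0 < Real.Gamma (y + 1) := Real.Gamma_pos_of_pos (by linarith)
      have : Real.log (Real.Gamma (y + 1)) ≤ 0 := by linarith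
      exact (Real.log_nonpos_iff hGypos.le).mp this
    have hGypos : 0 < Real.Gamma (y + 1) := Real.Gamma_pos_of_pos (by linarith)
    have hty : 0 < t ^ y := Real.rpow_pos_of_pos htpos y
    rw [le_div_iff₀ hty] at key2
    rw [ge_iff_le, le_div_iff₀ (by positivity)]
    calc t ^ y * (Real.Gamma (x + 1) * Real.Gamma (y + 1))
        ≤ t ^ y * (Real.Gamma (x + 1) * 1) := by gcongr
      _ = Real.Gamma (x + 1) * t ^ y := by ring
      _ ≤ Real.Gamma (t + 1) := key2
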